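/- Summing Cotterill's formula over all partitions λ of n-1 recovers Cayley's formula: Σ_{λ ⊢ n-1} (n-1)!²/((n-k(λ))! · Π_i i!^{m_i(λ)} m_i(λ)!) = n^{n-2}, where k(λ) is the number of parts of λ and m_i(λ) is the number of parts equal to i. -/

import Mathlib

open Finset Multiset Nat

theorem arrange_count' {β : Type*} [DecidableEq β] :
    ∀ (n : ℕ) (t : Multiset β) (F : Finset (Fin n → β)),
      (∀ f, f ∈ F ↔ Multiset.map f Finset.univ.val = t) → Multiset.card t = n →
      ∀ (s : Finset β), t.toFinset ⊆ s →
      F.card * ∏ b ∈ s, (t.count b)! = n ! := by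
  intro n
  induction n with
  | zero =>
    intro t F hF ht s _
    rw [Multiset.card_eq_zero] at ht
    subst ht
    have : F = {fun i : Fin 0 => i.elim0} := by
      ext f
      rw [hF]
      constructor
      · intro _; simp only [Finset.mem_singleton]; funext i; exact i.elim0
      · intro hf; simp
    rw [this]
    simp
  | succ n ih =>
    intro t F hF ht s hs
    have hmem : ∀ f ∈ F, f 0 ∈ t.toFinset := by
      intro f hf
      rw [hF] at hf
      rw [Multiset.mem_toFinset, ← hf]
      exact Multiset.mem_map_of_mem f (Finset.mem_univ_val _)
    have hmap : ∀ f : Fin (n+1) → β, Multiset.map f Finset.univ.val =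
        f 0 ::ₘ Multiset.map (f ∘ Fin.succ) Finset.univ.val := by
      intro f
      have h1 : Multiset.map f (Finset.univ.val : Multiset (Fin (n+1))) = ↑(List.ofFn f) := by
        rw [← Fin.univ_val_map]
      have h2 : Multiset.map (f ∘ Fin.succ) (Finset.univ.val : Multiset (Fin n)) =
          ↑(List.ofFn (f ∘ Fin.succ)) := by
        rw [← Fin.univ_val_map]
      rw [h1, h2, List.ofFn_succ]
      rfl
    have hcard := Finset.card_eq_sum_card_fiberwise hmem
    have key : ∀ v ∈ t.toFinset,
        (F.filter fun f => f 0 = v).card * ∏ b ∈ s, (t.count b)! = t.count v * n ! := by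
      intro v hv
      have hvs : v ∈ s := hs hv
      have hvt : v ∈ t := Multiset.mem_toFinset.mp hv
      -- the image finset
      set F' := (F.filter fun f => f 0 = v).image (fun f : Fin (n+1) → β => f ∘ Fin.succ) with hF'
      have hinj : Set.InjOn (fun f : Fin (n+1) → β => f ∘ Fin.succ)
          ((F.filter fun f => f 0 = v) : Set (Fin (n+1) → β)) := by
        intro f hf g hg hfg
        simp only [Finset.coe_filter, Set.mem_setOf_eq] at hf hg
        funext i
        refine Fin.cases ?_ ?_ i
        · rw [hf.2, hg.2]
        · intro j; exact congrFun hfg j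
      have hcardF' : (F.filter fun f => f 0 = v).card = F'.card :=
        (Finset.card_image_of_injOn hinj).symm
      have hF'mem : ∀ g, g ∈ F' ↔ Multiset.map g Finset.univ.val = t.erase v := by
        intro g
        constructor
        · intro hg
          rw [hF'] at hg
          obtain ⟨f, hf, rfl⟩ := Finset.mem_image.mp hg
          rw [Finset.mem_filter, hF] at hf
          obtain ⟨hf1, hf2⟩ := hf
          rw [hmap f, hf2] at hf1
          rw [← hf1, Multiset.erase_cons_head]
        · intro hg
          rw [hF']
          refine Finset.mem_image.mpr ⟨Fin.cons v g, ?_, ?_⟩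
          · rw [Finset.mem_filter, hF, hmap]
            constructor
            · have e1 : (Fin.cons v g : Fin (n+1) → β) 0 = v := rfl
              have e2 : (Fin.cons v g : Fin (n+1) → β) ∘ Fin.succ = g := by
                funext j; simp
              rw [e1, e2, hg, Multiset.cons_erase hvt]
            · rfl
          · funext j; simp
      have hprod : ∏ b ∈ s, (t.count b)! =
          t.count v * ∏ b ∈ s, ((t.erase v).count b)! := by
        rw [← Finset.mul_prod_erase s _ hvs,
            ← Finset.mul_prod_erase s (fun b => ((t.erase v).count b)!) hvs]
        have h1 : (t.count v)! = t.count v * ((t.erase v).count v)! := by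
          rw [Multiset.count_erase_self]
          have h : t.count v = (t.count v - 1) + 1 :=
            (Nat.sub_add_cancel (Multiset.one_le_count_iff_mem.mpr hvt)).symm
          nth_rewrite 1 [h]
          rw [Nat.factorial_succ, ← h]
        rw [h1]
        have h2 : ∀ b ∈ s.erase v, (t.count b)! = ((t.erase v).count b)! := by
          intro b hb
          rw [Multiset.count_erase_of_ne (Finset.ne_of_mem_erase hb)]
        rw [Finset.prod_congr rfl h2]
        ring
      rw [hprod, hcardF', ← mul_assoc, mul_comm F'.card (t.count v), mul_assoc]
      congr 1
      apply ih (t.erase v) F' hF'mem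
      · rw [Multiset.card_erase_of_mem hvt, ht]; rfl
      · exact fun b hb => hs (Multiset.toFinset_subset.mpr (Multiset.erase_subset v t) hb)
    rw [hcard, Finset.sum_mul, Finset.sum_congr rfl key, ← Finset.sum_mul,
        Multiset.toFinset_sum_count_eq, ht, Nat.factorial_succ]

/-- junk-total map from tuples to partitions -/
def toPart (m n : ℕ) (k : Fin n → ℕ) : Nat.Partition m :=
  if h : ((Multiset.map k Finset.univ.val).filter (0 < ·)).sum = m then
    { parts := (Multiset.map k Finset.univ.val).filter (0 < ·),
      parts_pos := fun hi => (Multiset.mem_filter.mp hi).2,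
      parts_sum := h }
  else
    { parts := Multiset.replicate m 1,
      parts_pos := fun hi => by
        rw [Multiset.eq_of_mem_replicate hi]; norm_num
      parts_sum := by simp }

lemma card_le_sum' (s : Multiset ℕ) (h : ∀ x ∈ s, 0 < x) : Multiset.card s ≤ s.sum := by
  induction s using Multiset.induction with
  | empty => simp
  | cons a s ihs =>
    simp only [Multiset.card_cons, Multiset.sum_cons]
    have h1 := h a (Multiset.mem_cons_self _ _)
    have h2 := ihs (fun x hx => h x (Multiset.mem_cons_of_mem hx))
    omega

lemma mem_fiber_iff (n m : ℕ) (lam : Nat.Partition m) (hK : lam.parts.card ≤ n)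
    (k : Fin n → ℕ) :
    (k ∈ Finset.piAntidiag Finset.univ m ∧ toPart m n k = lam) ↔
      Multiset.map k Finset.univ.val =
        lam.parts + Multiset.replicate (n - lam.parts.card) 0 := by
  set T := Multiset.map k Finset.univ.val with hT
  have hTsum : T.sum = ∑ i : Fin n, k i := (Finset.sum_eq_multiset_sum _ _).symm
  have hTcard : Multiset.card T = n := by
    rw [hT, Multiset.card_map]
    simp
  constructor
  · rintro ⟨hk, htp⟩
    rw [Finset.mem_piAntidiag] at hk
    set P := T.filter (0 < ·) with hP
    set Z := T.filter (fun x => ¬ 0 < x) with hZ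
    have hZ0 : ∀ b ∈ Z, b = 0 := by
      intro b hb
      have := (Multiset.mem_filter.mp hb).2
      omega
    have hZrep : Z = Multiset.replicate (Multiset.card Z) 0 :=
      Multiset.eq_replicate.mpr ⟨rfl, hZ0⟩
    have hPZ : P + Z = T := Multiset.filter_add_not _ _
    have hZsum : Z.sum = 0 := by
      rw [hZrep, Multiset.sum_replicate, smul_zero]
    have hTm : T.sum = m := by rw [hTsum]; exact hk.1
    have hPsum : P.sum = m := by
      have : P.sum + Z.sum = T.sum := by rw [← Multiset.sum_add, hPZ]
      rw [hZsum, hTm] at this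
      omega
    have htp' : lam.parts = P := by
      rw [← htp, toPart, dif_pos hPsum]
    have hPcard : Multiset.card P = lam.parts.card := by rw [htp']
    have hZcard : Multiset.card Z = n - lam.parts.card := by
      have : Multiset.card P + Multiset.card Z = n := by
        rw [← Multiset.card_add, hPZ, hTcard]
      omega
    rw [← hPZ, htp', hZrep, hZcard, hPcard]
  · intro h
    have hsum : T.sum = m := by
      rw [h, Multiset.sum_add, Multiset.sum_replicate, smul_zero, add_zero,
        lam.parts_sum]
    have hfil : T.filter (0 < ·) = lam.parts := by
      rw [h, Multiset.filter_add]
      rw [Multiset.filter_eq_self.mpr (fun a ha => lam.parts_pos ha)]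
      have : (Multiset.replicate (n - lam.parts.card) 0).filter (0 < ·) = 0 := by
        apply Multiset.filter_eq_nil.mpr
        intro a ha
        rw [Multiset.eq_of_mem_replicate ha]
        omega
      rw [this, add_zero]
    constructor
    · rw [Finset.mem_piAntidiag]
      refine ⟨by rw [← hTsum, hsum], fun i _ => Finset.mem_univ i⟩
    · have hfsum : (T.filter (0 < ·)).sum = m := by rw [hfil, lam.parts_sum]
      rw [toPart]
      rw [dif_pos hfsum]
      exact Nat.Partition.ext hfil

lemma fiber_sum (n m : ℕ) (hm : m + 1 = n) (lam : Nat.Partition m) :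
    ∑ k ∈ (Finset.piAntidiag (Finset.univ : Finset (Fin n)) m).filter
        (fun k => toPart m n k = lam), ((Nat.multinomial Finset.univ k : ℚ)) =
      ((n ! : ℚ) * m !) /
        ((Nat.factorial (n - lam.parts.card) : ℚ) *
          ∏ i ∈ Finset.Icc 1 n,
            (Nat.factorial i : ℚ) ^ (Multiset.count i lam.parts) *
              Nat.factorial (Multiset.count i lam.parts)) := by
  have hKm : lam.parts.card ≤ m := by
    have := card_le_sum' lam.parts (fun x hx => lam.parts_pos hx)
    rw [lam.parts_sum] at this
    exact this
  have hK : lam.parts.card ≤ n := by omega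
  set K := lam.parts.card with hKdef
  set t : Multiset ℕ := lam.parts + Multiset.replicate (n - K) 0 with ht
  set F := (Finset.piAntidiag (Finset.univ : Finset (Fin n)) m).filter
      (fun k => toPart m n k = lam) with hF
  have hFmem : ∀ k, k ∈ F ↔ Multiset.map k Finset.univ.val = t := by
    intro k
    rw [hF, Finset.mem_filter, ← mem_fiber_iff n m lam hK k]
  have htcard : Multiset.card t = n := by
    rw [ht, Multiset.card_add, Multiset.card_replicate]
    omega
  have hparts_mem : ∀ i ∈ lam.parts, i ∈ Finset.Icc 1 n := by
    intro i hi
    rw [Finset.mem_Icc]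
    refine ⟨lam.parts_pos hi, ?_⟩
    have := Multiset.single_le_sum (fun x _ => Nat.zero_le x) i hi
    rw [lam.parts_sum] at this
    omega
  have hsub : t.toFinset ⊆ insert 0 (Finset.Icc 1 n) := by
    intro b hb
    rw [Multiset.mem_toFinset, ht, Multiset.mem_add] at hb
    rcases hb with hb | hb
    · exact Finset.mem_insert_of_mem (hparts_mem b hb)
    · rw [Multiset.eq_of_mem_replicate hb]
      exact Finset.mem_insert_self _ _
  have h0notIcc : (0 : ℕ) ∉ Finset.Icc 1 n := by simp
  -- counting identity
  have hcount := arrange_count' n t F hFmem htcard (insert 0 (Finset.Icc 1 n)) hsub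
  rw [Finset.prod_insert h0notIcc] at hcount
  have hcount0 : t.count 0 = n - K := by
    rw [ht, Multiset.count_add, Multiset.count_replicate, if_pos rfl]
    have : Multiset.count 0 lam.parts = 0 := by
      rw [Multiset.count_eq_zero]
      intro h
      exact absurd (lam.parts_pos h) (lt_irrefl 0)
    omega
  have hcounti : ∀ i ∈ Finset.Icc 1 n, t.count i = lam.parts.count i := by
    intro i hi
    rw [Finset.mem_Icc] at hi
    rw [ht, Multiset.count_add, Multiset.count_replicate, if_neg (by omega), add_zero]
  rw [hcount0, Finset.prod_congr rfl (fun i hi => by rw [hcounti i hi])] at hcount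
  -- hcount : F.card * ((n - K)! * ∏ i in Icc 1 n, (count i lam.parts)!) = n !
  -- multinomial constancy
  have hmult : ∀ k ∈ F, (Nat.multinomial (Finset.univ : Finset (Fin n)) k) *
      ∏ i ∈ Finset.Icc 1 n, (i !) ^ (Multiset.count i lam.parts) = m ! := by
    intro k hk
    have hmap := (hFmem k).mp hk
    have hsum : ∑ i : Fin n, k i = m := by
      have := (Finset.mem_filter.mp hk).1
      rw [Finset.mem_piAntidiag] at this
      exact this.1
    have hspec := Nat.multinomial_spec (Finset.univ : Finset (Fin n)) k
    rw [hsum] at hspec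
    have hprod : ∏ i : Fin n, (k i)! = ∏ i ∈ Finset.Icc 1 n,
        (i !) ^ (Multiset.count i lam.parts) := by
      have e1 : ∏ i : Fin n, (k i)! = (Multiset.map (fun b => b !)
          (Multiset.map k Finset.univ.val)).prod := by
        rw [Multiset.map_map, Finset.prod_eq_multiset_prod]
        rfl
      rw [e1, hmap, ht, Multiset.map_add, Multiset.prod_add, Multiset.map_replicate]
      simp only [Nat.factorial_zero, Multiset.prod_replicate, one_pow, mul_one]
      rw [Finset.prod_multiset_map_count]
      apply Finset.prod_subset
      · intro i hi
        exact hparts_mem i (Multiset.mem_toFinset.mp hi)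
      · intro i _ hi
        rw [Multiset.count_eq_zero.mpr (fun h => hi (Multiset.mem_toFinset.mpr h)),
          pow_zero]
    rw [← hprod, mul_comm]
    exact hspec
  -- now to ℚ
  have hsum_eq : ∑ k ∈ F, ((Nat.multinomial Finset.univ k : ℚ)) =
      F.card * ((m ! : ℚ) / ∏ i ∈ Finset.Icc 1 n,
        (Nat.factorial i : ℚ) ^ (Multiset.count i lam.parts)) := by
    rw [Finset.sum_congr rfl (fun k hk => ?_), Finset.sum_const, nsmul_eq_mul]
    have h := hmult k hk
    have hP1 : (∏ i ∈ Finset.Icc 1 n, (Nat.factorial i : ℚ) ^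
        (Multiset.count i lam.parts)) ≠ 0 := by
      apply Finset.prod_ne_zero_iff.mpr
      intro i _
      positivity
    field_simp
    have := congrArg (fun x : ℕ => (x : ℚ)) h
    push_cast at this
    linarith [this]
  rw [hsum_eq]
  have hcard : (F.card : ℚ) = (n ! : ℚ) / ((Nat.factorial (n - K) : ℚ) *
      ∏ i ∈ Finset.Icc 1 n, (Nat.factorial (Multiset.count i lam.parts) : ℚ)) := by
    have := congrArg (fun x : ℕ => (x : ℚ)) hcount
    push_cast at this
    have hne : ((Nat.factorial (n - K) : ℚ) *
        ∏ i ∈ Finset.Icc 1 n, (Nat.factorial (Multiset.count i lam.parts) : ℚ)) ≠ 0 := by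
      apply mul_ne_zero
      · positivity
      · apply Finset.prod_ne_zero_iff.mpr; intro i _; positivity
    field_simp
    linarith [this]
  rw [hcard]
  rw [Finset.prod_mul_distrib]
  have hne1 : (∏ i ∈ Finset.Icc 1 n, (Nat.factorial i : ℚ) ^
      (Multiset.count i lam.parts)) ≠ 0 := by
    apply Finset.prod_ne_zero_iff.mpr; intro i _; positivity
  have hne2 : (∏ i ∈ Finset.Icc 1 n,
      (Nat.factorial (Multiset.count i lam.parts) : ℚ)) ≠ 0 := by
    apply Finset.prod_ne_zero_iff.mpr; intro i _; positivity
  have hne3 : ((Nat.factorial (n - K)) : ℚ) ≠ 0 := by positivity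
  field_simp

theorem sum_cotterill_eq_cayley (n : ℕ) (hn : 1 ≤ n) :
    ∑ lam : Nat.Partition (n - 1),
        ((Nat.factorial (n - 1) : ℚ) * Nat.factorial (n - 1)) /
          ((Nat.factorial (n - lam.parts.card) : ℚ) *
            ∏ i ∈ Finset.Icc 1 n,
              (Nat.factorial i : ℚ) ^ (Multiset.count i lam.parts) *
                Nat.factorial (Multiset.count i lam.parts)) =
      (n : ℚ) ^ (n - 2) := by
  set m := n - 1 with hm
  have hmn : m + 1 = n := by omega
  -- multinomial theorem : n ^ m = ∑ multinomial
  have hpow : (n : ℚ) ^ m = ∑ k ∈ Finset.piAntidiag (Finset.univ : Finset (Fin n)) m,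
      ((Nat.multinomial Finset.univ k : ℚ)) := by
    have := Finset.sum_pow_eq_sum_piAntidiag (Finset.univ : Finset (Fin n))
      (fun _ => (1 : ℚ)) m
    simp only [Finset.sum_const, Finset.card_univ, Fintype.card_fin, nsmul_eq_mul,
      mul_one, one_pow, Finset.prod_const_one] at this
    exact this
  -- fiberwise decomposition
  have hfib : ∑ k ∈ Finset.piAntidiag (Finset.univ : Finset (Fin n)) m,
      ((Nat.multinomial Finset.univ k : ℚ)) =
      ∑ lam : Nat.Partition m, ∑ k ∈ (Finset.piAntidiag
        (Finset.univ : Finset (Fin n)) m).filter (fun k => toPart m n k = lam),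
        ((Nat.multinomial Finset.univ k : ℚ)) := by
    rw [Finset.sum_fiberwise_of_maps_to (fun k _ => Finset.mem_univ (toPart m n k))]
  -- rewrite each summand
  have hterm : ∀ lam : Nat.Partition m,
      ((Nat.factorial m : ℚ) * Nat.factorial m) /
          ((Nat.factorial (n - lam.parts.card) : ℚ) *
            ∏ i ∈ Finset.Icc 1 n,
              (Nat.factorial i : ℚ) ^ (Multiset.count i lam.parts) *
                Nat.factorial (Multiset.count i lam.parts)) =
      (1 / n) * ∑ k ∈ (Finset.piAntidiag (Finset.univ : Finset (Fin n)) m).filter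
        (fun k => toPart m n k = lam), ((Nat.multinomial Finset.univ k : ℚ)) := by
    intro lam
    rw [fiber_sum n m hmn lam]
    have hfact : (n ! : ℚ) = n * m ! := by
      rw [← hmn, Nat.factorial_succ]
      push_cast
      ring
    rw [hfact]
    have hD : ((Nat.factorial (n - lam.parts.card) : ℚ) *
        ∏ i ∈ Finset.Icc 1 n,
          (Nat.factorial i : ℚ) ^ (Multiset.count i lam.parts) *
            Nat.factorial (Multiset.count i lam.parts)) ≠ 0 := by
      apply mul_ne_zero
      · positivity
      · apply Finset.prod_ne_zero_iff.mpr
        intro i _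
        apply mul_ne_zero
        · positivity
        · positivity
    have hn0 : (n : ℚ) ≠ 0 := by positivity
    field_simp
  rw [Finset.sum_congr rfl (fun lam _ => hterm lam), ← Finset.mul_sum, ← hfib, ← hpow]
  -- (1/n) * n^m = n^(n-2)
  rcases eq_or_lt_of_le hn with h1 | h2
  · rw [← h1]
    norm_num
  · have : m = (n - 2) + 1 := by omega
    rw [this, pow_succ]
    have hn0 : (n : ℚ) ≠ 0 := by positivity
    field_simp
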